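/- arXiv:1901.06840 — 3 statements merged into one kernel-verified Lean document; each statement's English description precedes it below -/
import Mathlib

section
/- Sphere-packing bound for indexed-set codes: any (t, ε₁, ε₂)-indexed-set code C ⊆ I_M^L satisfies |C| ≤ 2^{M·L_M} / (C(M,t) · (B_{ε₂}(L_M) - 1)^t), where L_M = L - log M, C(M,t) is the binomial coefficient, and B_r(n) = Σ_{i=0}^{r} C(n,i) is the size of the Hamming ball of radius r. -/
open scoped Classical

def ballB (r n : ℕ) : ℕ := ∑ i ∈ Finset.range (r + 1), n.choose i

lemma hammingNorm_def' {n : ℕ} (v : Fin n → ZMod 2) :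
    hammingNorm v = (Finset.univ.filter (fun i => v i ≠ 0)).card := rfl

lemma zmod2_ne_zero' {a : ZMod 2} (h : a ≠ 0) : a = 1 := by
  revert h; revert a; decide

lemma card_ball' (r n : ℕ) :
    (Finset.univ.filter (fun v : Fin n → ZMod 2 => hammingNorm v ≤ r)).card = ballB r n := by
  rw [Finset.card_eq_sum_card_fiberwise
    (f := fun v : Fin n → ZMod 2 => hammingNorm v) (t := Finset.range (r+1))
    (fun v hv => Finset.mem_range.2 (Nat.lt_succ_of_le (Finset.mem_filter.1 hv).2))]
  unfold ballB
  refine Finset.sum_congr rfl (fun i hi => ?_)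
  rw [Finset.mem_range] at hi
  rw [Finset.filter_filter]
  have hcond : ∀ v : Fin n → ZMod 2,
      (hammingNorm v ≤ r ∧ hammingNorm v = i) ↔ hammingNorm v = i := by
    intro v
    constructor
    · exact fun h => h.2
    · intro h; exact ⟨by omega, h⟩
  rw [Finset.filter_congr (fun v _ => hcond v)]
  have hbij : (Finset.univ.filter (fun v : Fin n → ZMod 2 => hammingNorm v = i)).card
      = (Finset.powersetCard i (Finset.univ : Finset (Fin n))).card := by
    refine Finset.card_bij'
      (fun v _ => Finset.univ.filter (fun j => v j ≠ 0))
      (fun T _ => fun j => if j ∈ T then (1 : ZMod 2) else 0) ?_ ?_ ?_ ?_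
    · intro v hv
      simp only [Finset.mem_filter] at hv
      rw [Finset.mem_powersetCard]
      exact ⟨Finset.subset_univ _, hv.2⟩
    · intro T hT
      rw [Finset.mem_powersetCard] at hT
      simp only [Finset.mem_filter, Finset.mem_univ, true_and]
      rw [hammingNorm_def']
      rw [show (Finset.univ.filter (fun j => (if j ∈ T then (1 : ZMod 2) else 0) ≠ 0)) = T by
        ext j; simp]
      exact hT.2
    · intro v hv
      funext j
      by_cases h : v j = 0
      · simp [h]
      · simp [h, zmod2_ne_zero' h]
    · intro T hT
      ext j; simp
  rw [hbij, Finset.card_powersetCard, Finset.card_univ, Fintype.card_fin]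

def chanOut {M m LM : ℕ} (t ε₁ ε₂ : ℕ) (I : Fin M → Fin m → ZMod 2)
    (u : Fin M → Fin LM → ZMod 2) :
    Set (Finset ((Fin m → ZMod 2) × (Fin LM → ZMod 2))) :=
  { S' | ∃ (eI : Fin M → Fin m → ZMod 2) (eD : Fin M → Fin LM → ZMod 2),
      (Finset.univ.filter (fun i => ¬(eI i = 0 ∧ eD i = 0))).card ≤ t ∧
      (∀ i, hammingNorm (eI i) ≤ ε₁) ∧ (∀ i, hammingNorm (eD i) ≤ ε₂) ∧
      S' = Finset.image (fun i => (I i + eI i, u i + eD i)) Finset.univ }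

/-- sphere-packing bound. Any `(t,ε₁,ε₂)`-indexed-set code `C` satisfies
`|C| ≤ 2^{M·L_M} / (C(M,t)·(B_{ε₂}(L_M) - 1)^t)`, stated multiplicatively. -/
theorem sphere_packing_bound (M m LM t ε₁ ε₂ : ℕ) (hM : M = 2 ^ m)
    (ht : t ≤ M) (hε₂ : 1 ≤ ε₂)
    (I : Fin M → Fin m → ZMod 2) (hI : Function.Injective I)
    (C : Finset (Fin M → Fin LM → ZMod 2))
    (hcode : ∀ u₁ ∈ C, ∀ u₂ ∈ C, u₁ ≠ u₂ →
      chanOut t ε₁ ε₂ I u₁ ∩ chanOut t ε₁ ε₂ I u₂ = ∅) :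
    C.card * (M.choose t * (ballB ε₂ LM - 1) ^ t) ≤ 2 ^ (M * LM) := by
  classical
  set E : Finset (Fin LM → ZMod 2) :=
    Finset.univ.filter (fun v => v ≠ 0 ∧ hammingNorm v ≤ ε₂) with hE
  have hEcard : E.card = ballB ε₂ LM - 1 := by
    have h1 : E = (Finset.univ.filter
        (fun v : Fin LM → ZMod 2 => hammingNorm v ≤ ε₂)).erase 0 := by
      ext v
      simp only [hE, Finset.mem_filter, Finset.mem_erase, Finset.mem_univ, true_and]
      try tauto
    have h0 : (0 : Fin LM → ZMod 2) ∈
        Finset.univ.filter (fun v : Fin LM → ZMod 2 => hammingNorm v ≤ ε₂) := by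
      simp [hammingNorm_zero]
    rw [h1, Finset.card_erase_of_mem h0, card_ball']
  set D : Finset (Fin M → Fin LM → ZMod 2) :=
    Finset.univ.filter (fun e => (Finset.univ.filter (fun i => e i ≠ 0)).card = t ∧
      ∀ i, hammingNorm (e i) ≤ ε₂) with hD
  have hDcard : D.card = M.choose t * E.card ^ t := by
    rw [Finset.card_eq_sum_card_fiberwise
      (f := fun e : Fin M → Fin LM → ZMod 2 => Finset.univ.filter (fun i => e i ≠ 0))
      (t := Finset.powersetCard t (Finset.univ : Finset (Fin M)))
      (fun e he => by
        simp only [hD, Finset.mem_coe, Finset.mem_filter] at he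
        exact Finset.mem_powersetCard.2 ⟨Finset.subset_univ _, he.2.1⟩)]
    have hfiber : ∀ T ∈ Finset.powersetCard t (Finset.univ : Finset (Fin M)),
        (D.filter (fun e => Finset.univ.filter (fun i => e i ≠ 0) = T)).card
          = E.card ^ t := by
      intro T hT
      rw [Finset.mem_powersetCard] at hT
      have hcard : (T.pi (fun _ => E)).card = E.card ^ t := by
        rw [Finset.card_pi, Finset.prod_const, hT.2]
      rw [← hcard]
      refine Finset.card_bij'
        (fun e _ => fun i _ => e i)
        (fun g _ => fun i => if h : i ∈ T then g i h else 0) ?_ ?_ ?_ ?_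
      · intro e he
        simp only [hD, Finset.mem_filter, Finset.mem_univ, true_and] at he
        rw [Finset.mem_pi]
        intro i hiT
        have hne : e i ≠ 0 := by
          intro h0
          have : i ∈ Finset.univ.filter (fun i => e i ≠ 0) := by rw [he.2]; exact hiT
          simp [h0] at this
        simp only [hE, Finset.mem_filter, Finset.mem_univ, true_and]
        exact ⟨hne, he.1.2 i⟩
      · intro g hg
        rw [Finset.mem_pi] at hg
        simp only [hD, Finset.mem_filter, Finset.mem_univ, true_and]
        have hsupp : (Finset.univ.filter
            (fun i => (if h : i ∈ T then g i h else 0) ≠ 0)) = T := by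
          ext i
          simp only [Finset.mem_filter, Finset.mem_univ, true_and]
          constructor
          · intro h
            by_contra hiT
            simp [hiT] at h
          · intro hiT
            have := hg i hiT
            simp only [hE, Finset.mem_filter, Finset.mem_univ, true_and] at this
            simp [hiT, this.1]
        refine ⟨⟨?_, ?_⟩, hsupp⟩
        · rw [hsupp]; exact hT.2
        · intro i
          by_cases h : i ∈ T
          · have := hg i h
            simp only [hE, Finset.mem_filter, Finset.mem_univ, true_and] at this
            simp [h, this.2]
          · simp [h, hammingNorm_zero]
      · intro e he
        simp only [hD, Finset.mem_filter, Finset.mem_univ, true_and] at he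
        funext i
        by_cases h : i ∈ T
        · simp [h]
        · simp only [h, dif_neg, not_false_iff]
          by_contra hne
          have : i ∈ Finset.univ.filter (fun i => e i ≠ 0) := by
            simp [Ne.symm hne]
          rw [he.2] at this
          exact h this
      · intro g hg
        funext i hiT
        simp [hiT]
    rw [Finset.sum_congr rfl hfiber, Finset.sum_const, Finset.card_powersetCard,
      Finset.card_univ, Fintype.card_fin, smul_eq_mul]
  have hinj : Set.InjOn (fun p : (Fin M → Fin LM → ZMod 2) × (Fin M → Fin LM → ZMod 2) =>
      p.1 + p.2) (C ×ˢ D : Finset _) := by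
    rintro ⟨u₁, e₁⟩ h₁ ⟨u₂, e₂⟩ h₂ heq
    simp only [Finset.mem_coe, Finset.mem_product] at h₁ h₂
    simp only at heq
    have hmemD := h₁.2
    have hmemD2 := h₂.2
    simp only [hD, Finset.mem_filter, Finset.mem_univ, true_and] at hmemD hmemD2
    have hu : u₁ = u₂ := by
      by_contra hne
      have hdisj := hcode u₁ h₁.1 u₂ h₂.1 hne
      set S' : Finset ((Fin m → ZMod 2) × (Fin LM → ZMod 2)) :=
        Finset.image (fun i => (I i, u₁ i + e₁ i)) Finset.univ with hS'
      have hmem1 : S' ∈ chanOut t ε₁ ε₂ I u₁ := by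
        refine ⟨0, e₁, ?_, fun i => by simp [hammingNorm_zero], hmemD.2, ?_⟩
        · calc (Finset.univ.filter
              (fun i => ¬((0 : Fin M → Fin m → ZMod 2) i = 0 ∧ e₁ i = 0))).card
              = (Finset.univ.filter (fun i => e₁ i ≠ 0)).card := by
                congr 1
                apply Finset.filter_congr
                intro i _
                simp
          _ ≤ t := le_of_eq hmemD.1
        · rw [hS']
          exact Finset.image_congr (fun i _ => by simp)
      have hmem2 : S' ∈ chanOut t ε₁ ε₂ I u₂ := by
        refine ⟨0, e₂, ?_, fun i => by simp [hammingNorm_zero], hmemD2.2, ?_⟩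
        · calc (Finset.univ.filter
              (fun i => ¬((0 : Fin M → Fin m → ZMod 2) i = 0 ∧ e₂ i = 0))).card
              = (Finset.univ.filter (fun i => e₂ i ≠ 0)).card := by
                congr 1
                apply Finset.filter_congr
                intro i _
                simp
          _ ≤ t := le_of_eq hmemD2.1
        · rw [hS']
          refine Finset.image_congr (fun i _ => ?_)
          have h2 := congrFun heq i
          simp only [Pi.add_apply] at h2
          simp [h2]
      have hboth : S' ∈ chanOut t ε₁ ε₂ I u₁ ∩ chanOut t ε₁ ε₂ I u₂ := ⟨hmem1, hmem2⟩
      rw [hdisj] at hboth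
      exact hboth
    have he : e₁ = e₂ := by
      rw [hu] at heq
      exact add_left_cancel heq
    rw [hu, he]
  have hcardle : (C ×ˢ D).card ≤ Fintype.card (Fin M → Fin LM → ZMod 2) := by
    rw [← Finset.card_univ]
    exact Finset.card_le_card_of_injOn _ (fun _ _ => Finset.mem_univ _) hinj
  rw [Finset.card_product, hDcard, hEcard] at hcardle
  calc C.card * (M.choose t * (ballB ε₂ LM - 1) ^ t)
      ≤ Fintype.card (Fin M → Fin LM → ZMod 2) := hcardle
    _ = 2 ^ (M * LM) := by
      rw [Fintype.card_fun, Fintype.card_fun, ZMod.card, Fintype.card_fin, Fintype.card_fin,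
        ← pow_mul, mul_comm]
end

section
/- For an indexed set S, the number of channel outputs of the (t,0,ε₂)-channel (no index errors) that are again valid indexed sets is at most C(M,t)·(B_{ε₂}(L_M))^t, and when exactly t rows are corrupted with index errors allowed that permute erroneous sequences among themselves, the number of outputs that remain valid indexed sets is at most C(M,t)·t!·(B_{ε₂}(L_M))^t. -/
open scoped Classical

/-- A received set of sequences is a valid indexed set if it consists of `M` sequences
carrying each of the `M` index values exactly once. -/
def isIndexed {M m LM : ℕ} (I : Fin M → Fin m → ZMod 2)
    (S : Finset ((Fin m → ZMod 2) × (Fin LM → ZMod 2))) : Prop :=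
  ∃ u : Fin M → Fin LM → ZMod 2,
    S = Finset.image (fun i => (I i, u i)) Finset.univ

/-! ### Auxiliary counting lemmas -/

lemma card_le_ballB (r n : ℕ) :
    Nat.card {e : Fin n → ZMod 2 // hammingNorm e ≤ r} ≤ ballB r n := by
  rw [Nat.card_eq_fintype_card]
  have hinj : Function.Injective
      (fun e : {e : Fin n → ZMod 2 // hammingNorm e ≤ r} =>
        (⟨Finset.univ.filter fun i => e.1 i ≠ 0, by
            have h2 := e.2; unfold hammingNorm at h2; convert h2 using 2⟩ :
          {s : Finset (Fin n) // s.card ≤ r})) := by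
    intro e e' h
    apply Subtype.ext; funext i
    have h2 := congrArg (fun s => i ∈ s.1) h
    simp only [Finset.mem_filter, Finset.mem_univ, true_and, eq_iff_iff] at h2
    have hz : ∀ a : ZMod 2, a = 0 ∨ a = 1 := by decide
    rcases hz (e.1 i) with h1 | h1 <;> rcases hz (e'.1 i) with h3 | h3 <;>
      simp [h1, h3] at h2 ⊢
  calc Fintype.card _ ≤ Fintype.card {s : Finset (Fin n) // s.card ≤ r} :=
        Fintype.card_le_of_injective _ hinj
    _ ≤ ballB r n := ?_
  rw [Fintype.card_subtype]
  have he : (Finset.univ.filter fun s : Finset (Fin n) => s.card ≤ r) =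
      (Finset.range (r+1)).biUnion (fun k => Finset.powersetCard k Finset.univ) := by
    ext s
    simp only [Finset.mem_filter, Finset.mem_univ, true_and, Finset.mem_biUnion,
      Finset.mem_range, Finset.mem_powersetCard, Nat.lt_succ_iff]
    constructor
    · intro h; exact ⟨s.card, h, Finset.subset_univ s, rfl⟩
    · rintro ⟨k, hk, -, rfl⟩; exact hk
  rw [he, Finset.card_biUnion]
  · apply le_of_eq
    simp [ballB, Finset.card_powersetCard]
  · intro k hk l hl hkl
    simp only [Finset.disjoint_left, Finset.mem_powersetCard]
    rintro s ⟨-, h1⟩ ⟨-, h2⟩; exact hkl (h1 ▸ h2 ▸ rfl)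

lemma card_fix_perm {α : Type*} [Fintype α] [DecidableEq α] (T : Finset α) :
    Nat.card {σ : Equiv.Perm α // ∀ i ∉ T, σ i = i} ≤ T.card.factorial := by
  have hmem : ∀ (σ : {σ : Equiv.Perm α // ∀ i ∉ T, σ i = i}) (x : α),
      x ∈ T ↔ σ.1 x ∈ T := by
    intro σ x
    constructor
    · intro hx
      by_contra hσx
      have h1 : σ.1 (σ.1 x) = σ.1 x := σ.2 _ hσx
      have := σ.1.injective h1
      rw [this] at hσx; exact hσx hx
    · intro hσx
      by_contra hx
      rw [σ.2 x hx] at hσx; exact hx hσx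
  have hinj : Function.Injective
      (fun σ : {σ : Equiv.Perm α // ∀ i ∉ T, σ i = i} =>
        Equiv.Perm.subtypePerm σ.1 (fun x => (hmem σ x).symm)) := by
    intro σ τ h
    apply Subtype.ext; apply Equiv.ext; intro x
    by_cases hx : x ∈ T
    · have := congrArg (fun e => (e ⟨x, hx⟩ : {y // y ∈ T}).1) h
      simpa [Equiv.Perm.subtypePerm_apply] using this
    · rw [σ.2 x hx, τ.2 x hx]
  calc Nat.card {σ : Equiv.Perm α // ∀ i ∉ T, σ i = i}
      ≤ Nat.card (Equiv.Perm {x // x ∈ T}) := Nat.card_le_card_of_injective _ hinj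
    _ = T.card.factorial := by
        rw [Nat.card_eq_fintype_card, Fintype.card_perm, Fintype.card_coe]

lemma card_supp {M LM ε₂ : ℕ} (B : ℕ)
    (hB : Nat.card {e : Fin LM → ZMod 2 // hammingNorm e ≤ ε₂} ≤ B)
    (T : Finset (Fin M)) :
    Nat.card {eD : Fin M → Fin LM → ZMod 2 //
        (∀ i ∉ T, eD i = 0) ∧ ∀ i, hammingNorm (eD i) ≤ ε₂} ≤ B ^ T.card := by
  have hinj : Function.Injective
      (fun eD : {eD : Fin M → Fin LM → ZMod 2 //
          (∀ i ∉ T, eD i = 0) ∧ ∀ i, hammingNorm (eD i) ≤ ε₂} =>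
        (fun i : {x // x ∈ T} => (⟨eD.1 i.1, eD.2.2 i.1⟩ :
          {e : Fin LM → ZMod 2 // hammingNorm e ≤ ε₂}))) := by
    intro e e' h
    apply Subtype.ext; funext i
    by_cases hi : i ∈ T
    · have := congrArg (fun f => (f ⟨i, hi⟩ : {e : Fin LM → ZMod 2 // hammingNorm e ≤ ε₂}).1) h
      simpa using this
    · rw [e.2.1 i hi, e'.2.1 i hi]
  calc Nat.card _
      ≤ Nat.card ({x // x ∈ T} → {e : Fin LM → ZMod 2 // hammingNorm e ≤ ε₂}) :=
        Nat.card_le_card_of_injective _ hinj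
    _ = (Nat.card {e : Fin LM → ZMod 2 // hammingNorm e ≤ ε₂}) ^ T.card := by
        rw [Nat.card_eq_fintype_card, Fintype.card_fun, Fintype.card_coe,
          Nat.card_eq_fintype_card]
    _ ≤ B ^ T.card := Nat.pow_le_pow_left hB _

lemma card_sized {M t : ℕ} :
    Nat.card {T : Finset (Fin M) // T.card = t} = M.choose t := by
  rw [Nat.card_eq_fintype_card, Fintype.card_subtype]
  have he : (Finset.univ.filter fun T : Finset (Fin M) => T.card = t) =
      Finset.powersetCard t Finset.univ := by
    ext T; simp [Finset.mem_powersetCard, Finset.subset_univ]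
  rw [he, Finset.card_powersetCard, Finset.card_univ, Fintype.card_fin]

lemma nat_card_sigma_le {ι : Type*} [Finite ι] {β : ι → Type*} [∀ i, Finite (β i)]
    (n : ℕ) (h : ∀ i, Nat.card (β i) ≤ n) :
    Nat.card (Σ i, β i) ≤ Nat.card ι * n := by
  haveI := Fintype.ofFinite ι
  haveI : ∀ i, Fintype (β i) := fun i => Fintype.ofFinite _
  rw [Nat.card_eq_fintype_card, Nat.card_eq_fintype_card, Fintype.card_sigma]
  calc ∑ i, Fintype.card (β i) ≤ ∑ _i : ι, n := by
        refine Finset.sum_le_sum fun i _ => ?_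
        rw [← Nat.card_eq_fintype_card]
        exact h i
    _ = Fintype.card ι * n := by rw [Finset.sum_const, Finset.card_univ, smul_eq_mul]

/-- The covering lemma: every channel output that is again a valid indexed set is of the
form `{(I (σ i), u i + eD i)}` for a permutation `σ` fixing everything outside a set `T`
of `t` rows and data errors `eD` supported on `T`; moreover if no index errors are allowed
then `σ` is the identity. -/
lemma cover {M m LM : ℕ} (t ε₁ ε₂ : ℕ) (ht : t ≤ M)
    (I : Fin M → Fin m → ZMod 2) (hI : Function.Injective I)
    (u : Fin M → Fin LM → ZMod 2)
    (S' : Finset ((Fin m → ZMod 2) × (Fin LM → ZMod 2)))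
    (hS' : S' ∈ chanOut t ε₁ ε₂ I u) (hidx : isIndexed I S') :
    ∃ (T : Finset (Fin M)) (σ : Equiv.Perm (Fin M)) (eD : Fin M → Fin LM → ZMod 2),
      T.card = t ∧ (∀ i ∉ T, σ i = i) ∧ (∀ i ∉ T, eD i = 0) ∧
      (∀ i, hammingNorm (eD i) ≤ ε₂) ∧ (ε₁ = 0 → σ = 1) ∧
      S' = Finset.image (fun i => (I (σ i), u i + eD i)) Finset.univ := by
  obtain ⟨eI, eD, hcard, hεI, hεD, hSeq⟩ := hS'
  obtain ⟨v, hv⟩ := hidx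
  set g : Fin M → (Fin m → ZMod 2) × (Fin LM → ZMod 2) :=
    fun i => (I i + eI i, u i + eD i) with hg
  set h : Fin M → (Fin m → ZMod 2) × (Fin LM → ZMod 2) :=
    fun i => (I i, v i) with hh
  have hvg : Finset.image g Finset.univ = Finset.image h Finset.univ := by
    rw [← hSeq, hv]
  have hinj_h : Function.Injective h := fun a b hab => hI (congrArg Prod.fst hab)
  have hcardh : (Finset.image h Finset.univ).card = (Finset.univ : Finset (Fin M)).card :=
    Finset.card_image_of_injective (Finset.univ : Finset (Fin M)) hinj_h
  have hg_inj : Function.Injective g := by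
    have hc : ((Finset.univ : Finset (Fin M)).image g).card
        = (Finset.univ : Finset (Fin M)).card := by
      rw [hvg, hcardh]
    have hio := Finset.card_image_iff.mp hc
    intro a b hab
    exact hio (by simp) (by simp) hab
  have hmemg : ∀ i, ∃ j, h j = g i := by
    intro i
    have : g i ∈ Finset.image h Finset.univ := by
      rw [← hvg]; exact Finset.mem_image_of_mem g (Finset.mem_univ i)
    obtain ⟨j, -, hj⟩ := Finset.mem_image.mp this
    exact ⟨j, hj⟩
  choose σf hσf using hmemg
  have hσinj : Function.Injective σf := by
    intro a b hab
    exact hg_inj (by rw [← hσf a, ← hσf b, hab])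
  have hσbij : Function.Bijective σf := Finite.injective_iff_bijective.mp hσinj
  set σ : Equiv.Perm (Fin M) := Equiv.ofBijective σf hσbij with hσdef
  have hσapp : ∀ i, σ i = σf i := fun i => rfl
  have hfix : ∀ i, eI i = 0 → σf i = i := by
    intro i h0
    apply hI
    have h1 := congrArg Prod.fst (hσf i)
    simpa [hh, hg, h0] using h1
  set C := Finset.univ.filter (fun i => ¬(eI i = 0 ∧ eD i = 0)) with hC
  obtain ⟨T, hCT, hTuniv, hTcard⟩ :=
    Finset.exists_subsuperset_card_eq (Finset.subset_univ C) hcard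
      (by simp [ht])
  have hnC : ∀ i ∉ T, eI i = 0 ∧ eD i = 0 := by
    intro i hi
    have : i ∉ C := fun hiC => hi (hCT hiC)
    simpa [hC] using this
  refine ⟨T, σ, eD, hTcard, ?_, ?_, hεD, ?_, ?_⟩
  · intro i hi; rw [hσapp]; exact hfix i (hnC i hi).1
  · intro i hi; exact (hnC i hi).2
  · intro hε0
    apply Equiv.ext; intro i
    rw [hσapp]
    refine hfix i ?_
    have := hεI i; rw [hε0, Nat.le_zero, hammingNorm_eq_zero] at this
    exact this
  · have hkey : ∀ i, (I (σ i), u i + eD i) = g i := by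
      intro i
      have h1 := congrArg Prod.fst (hσf i)
      exact Prod.ext (by rw [hσapp]; exact h1) rfl
    rw [hSeq]
    apply Finset.image_congr
    intro i _
    exact (hkey i).symm

set_option maxHeartbeats 1000000

/-- (i) the number of outputs of the `(t,0,ε₂)`-channel (no index errors) that
are valid indexed sets is at most `C(M,t)·(B_{ε₂}(L_M))^t`; (ii) allowing index errors
(which, to stay a valid indexed set, can only permute the indices of the erroneous
sequences among themselves), the number of outputs that are valid indexed sets is at most
`C(M,t)·t!·(B_{ε₂}(L_M))^t`. -/
theorem count_indexed_outputs (M m LM t ε₂ : ℕ) (hM : M = 2 ^ m) (ht : t ≤ M)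
    (I : Fin M → Fin m → ZMod 2) (hI : Function.Injective I)
    (u : Fin M → Fin LM → ZMod 2) :
    Set.ncard { S' ∈ chanOut t 0 ε₂ I u | isIndexed I S' }
      ≤ M.choose t * (ballB ε₂ LM) ^ t ∧
    Set.ncard { S' ∈ chanOut t m ε₂ I u | isIndexed I S' }
      ≤ M.choose t * t.factorial * (ballB ε₂ LM) ^ t := by
  have hball := card_le_ballB ε₂ LM
  constructor
  · -- part (i): no index errors
    set good := { S' ∈ chanOut t 0 ε₂ I u | isIndexed I S' } with hgood
    let Param := (T : {T : Finset (Fin M) // T.card = t}) ×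
      {eD : Fin M → Fin LM → ZMod 2 //
        (∀ i ∉ T.1, eD i = 0) ∧ ∀ i, hammingNorm (eD i) ≤ ε₂}
    let F : Param → Finset ((Fin m → ZMod 2) × (Fin LM → ZMod 2)) :=
      fun p => Finset.image (fun i => (I i, u i + p.2.1 i)) Finset.univ
    have hcov : ∀ S' ∈ good, ∃ p : Param, F p = S' := by
      intro S' hS'
      obtain ⟨T, σ, eD, hT, hσ, heD0, heDb, hσ1, hEq⟩ :=
        cover t 0 ε₂ ht I hI u S' hS'.1 hS'.2
      refine ⟨⟨⟨T, hT⟩, ⟨eD, heD0, heDb⟩⟩, ?_⟩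
      rw [hEq]
      simp only [hσ1 rfl, Equiv.Perm.one_apply, F]
    have hkey : Nat.card good ≤ Nat.card Param := by
      have : ∀ x : good, ∃ p : Param, F p = x.1 := fun x => hcov x.1 x.2
      choose f hf using this
      refine Nat.card_le_card_of_injective f ?_
      intro a b hab
      exact Subtype.ext (by rw [← hf a, ← hf b, hab])
    have hcount : Nat.card Param ≤ M.choose t * (ballB ε₂ LM) ^ t := by
      have hstep := nat_card_sigma_le (ι := {T : Finset (Fin M) // T.card = t})
        (β := fun T => {eD : Fin M → Fin LM → ZMod 2 //
          (∀ i ∉ T.1, eD i = 0) ∧ ∀ i, hammingNorm (eD i) ≤ ε₂})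
        ((ballB ε₂ LM) ^ t) (fun T => by
          have := card_supp (ballB ε₂ LM) hball T.1
          rwa [T.2] at this)
      rw [card_sized] at hstep
      exact hstep
    calc Set.ncard good = Nat.card good := (Nat.card_coe_set_eq good).symm
      _ ≤ Nat.card Param := hkey
      _ ≤ _ := hcount
  · -- part (ii): index errors allowed
    set good := { S' ∈ chanOut t m ε₂ I u | isIndexed I S' } with hgood
    let Param := (T : {T : Finset (Fin M) // T.card = t}) ×
      ({σ : Equiv.Perm (Fin M) // ∀ i ∉ T.1, σ i = i} ×
       {eD : Fin M → Fin LM → ZMod 2 //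
        (∀ i ∉ T.1, eD i = 0) ∧ ∀ i, hammingNorm (eD i) ≤ ε₂})
    let F : Param → Finset ((Fin m → ZMod 2) × (Fin LM → ZMod 2)) :=
      fun p => Finset.image (fun i => (I (p.2.1.1 i), u i + p.2.2.1 i)) Finset.univ
    have hcov : ∀ S' ∈ good, ∃ p : Param, F p = S' := by
      intro S' hS'
      obtain ⟨T, σ, eD, hT, hσ, heD0, heDb, -, hEq⟩ :=
        cover t m ε₂ ht I hI u S' hS'.1 hS'.2
      exact ⟨⟨⟨T, hT⟩, ⟨σ, hσ⟩, ⟨eD, heD0, heDb⟩⟩, hEq.symm⟩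
    have hkey : Nat.card good ≤ Nat.card Param := by
      have : ∀ x : good, ∃ p : Param, F p = x.1 := fun x => hcov x.1 x.2
      choose f hf using this
      refine Nat.card_le_card_of_injective f ?_
      intro a b hab
      exact Subtype.ext (by rw [← hf a, ← hf b, hab])
    have hcount : Nat.card Param
        ≤ M.choose t * t.factorial * (ballB ε₂ LM) ^ t := by
      have hstep := nat_card_sigma_le (ι := {T : Finset (Fin M) // T.card = t})
        (β := fun T => {σ : Equiv.Perm (Fin M) // ∀ i ∉ T.1, σ i = i} ×
          {eD : Fin M → Fin LM → ZMod 2 //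
            (∀ i ∉ T.1, eD i = 0) ∧ ∀ i, hammingNorm (eD i) ≤ ε₂})
        (t.factorial * (ballB ε₂ LM) ^ t) (fun T => by
          rw [Nat.card_prod]
          have h1 := card_fix_perm T.1
          have h2 := card_supp (ballB ε₂ LM) hball T.1
          rw [T.2] at h1 h2
          exact Nat.mul_le_mul h1 h2)
      rw [card_sized] at hstep
      calc Nat.card Param ≤ _ := hstep
        _ = M.choose t * t.factorial * (ballB ε₂ LM) ^ t := by ring
    calc Set.ncard good = Nat.card good := (Nat.card_coe_set_eq good).symm
      _ ≤ Nat.card Param := hkey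
      _ ≤ _ := hcount
end

section
/- If the anchoring property holds and at most t sequences are corrupted (with ≤ ε₁ index errors and ≤ ε₂ anchor/data errors each), then for every position i ∈ {1,...,M} at which the correct anchor a_i is known, there is exactly one received sequence x' with d(I(i), index(x')) ≤ ε₁ and d(a_i, anchor(x')) ≤ ε₂, namely the corrupted version of the original sequence x_i. -/
lemma hd_self_add {n : ℕ} (x e : Fin n → ZMod 2) :
    hammingDist x (x + e) = hammingNorm e := by
  rw [hammingDist_eq_hammingNorm]
  congr 1
  funext t
  simp [sub_eq_iff_eq_add']
  rw [← add_assoc, CharTwo.add_self_eq_zero, zero_add]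

/-- if the anchoring property holds and each sequence `x_j = (I(j), a_j, v_j)`
is corrupted by at most `ε₁` index errors and at most `ε₂` anchor errors, then for every
position `i` at which the correct anchor `a_i` is known there is exactly one received
sequence whose index is within distance `ε₁` of `I(i)` and whose anchor is within distance
`ε₂` of `a_i`, namely the corrupted version of `x_i`. -/
theorem anchor_exactly_one_match (M m l k ε₁ ε₂ : ℕ)
    (I : Fin M → Fin m → ZMod 2) (hI : Function.Injective I)
    (a : Fin M → Fin l → ZMod 2) (v : Fin M → Fin k → ZMod 2)
    (hanchor : ∀ i j, i ≠ j → hammingDist (I i) (I j) ≤ 2 * ε₁ →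
      2 * ε₂ < hammingDist (a i) (a j))
    (eI : Fin M → Fin m → ZMod 2) (eA : Fin M → Fin l → ZMod 2)
    (eV : Fin M → Fin k → ZMod 2)
    (heI : ∀ j, hammingNorm (eI j) ≤ ε₁) (heA : ∀ j, hammingNorm (eA j) ≤ ε₂)
    (i : Fin M) :
    (hammingDist (I i) (I i + eI i) ≤ ε₁ ∧ hammingDist (a i) (a i + eA i) ≤ ε₂) ∧
    ∀ j : Fin M, hammingDist (I i) (I j + eI j) ≤ ε₁ →
      hammingDist (a i) (a j + eA j) ≤ ε₂ → j = i := by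
  refine ⟨⟨by rw [hd_self_add]; exact heI i, by rw [hd_self_add]; exact heA i⟩, ?_⟩
  intro j h1 h2
  by_contra hne
  have hIij : hammingDist (I i) (I j) ≤ 2 * ε₁ := by
    calc hammingDist (I i) (I j) ≤ hammingDist (I i) (I j + eI j)
        + hammingDist (I j + eI j) (I j) := hammingDist_triangle _ _ _
      _ ≤ ε₁ + ε₁ := by
          apply Nat.add_le_add h1
          rw [hammingDist_comm, hd_self_add]; exact heI j
      _ = 2 * ε₁ := (two_mul ε₁).symm
  have haij : hammingDist (a i) (a j) ≤ 2 * ε₂ := by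
    calc hammingDist (a i) (a j) ≤ hammingDist (a i) (a j + eA j)
        + hammingDist (a j + eA j) (a j) := hammingDist_triangle _ _ _
      _ ≤ ε₂ + ε₂ := by
          apply Nat.add_le_add h2
          rw [hammingDist_comm, hd_self_add]; exact heA j
      _ = 2 * ε₂ := (two_mul ε₂).symm
  exact absurd haij (Nat.not_le.mpr (hanchor i j (Ne.symm hne) hIij)).elim
end
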